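/- Scalar core of the enhanced Helly convergence (Claims 1 and 3 in the proof of Theorem 4.3, eq. (4.3) of the paper): Let T > 0 and let (f_k)_{k∈ℕ} be a sequence of functions f_k : [0,T] → ℝ with sup_k Var(f_k;[0,T]) < ∞, and suppose that f_k(t) → f(t) as k → ∞ for every t ∈ [0,T]. Then there exist a subsequence (f_{k_j})_j and an at most countable set J ⊂ [0,T] such that for every t ∈ [0,T] \ J and every sequence (t_j)_j ⊂ [0,T] with t_j → t, one has f_{k_j}(t_j) → f(t) as j → ∞. -/

import Mathlib

open Filter Topology

/-- Scalar core of the enhanced Helly convergence: if `(f_k)` is a sequence of real-valued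
functions on `[0,T]` with uniformly bounded pointwise total variation converging pointwise to
`f` on `[0,T]`, then there are a subsequence `(f_{k_j})` and an at most countable set
`J ⊆ [0,T]` such that for every `t ∈ [0,T] \ J` and every sequence `(t_j) ⊆ [0,T]` converging
to `t`, one has `f_{k_j}(t_j) → f(t)`. -/
theorem scalar_enhanced_helly_convergence
    (T : ℝ) (hT : 0 < T) (f : ℕ → ℝ → ℝ) (flim : ℝ → ℝ)
    (hvar : ∃ C : ℝ, ∀ k : ℕ, eVariationOn (f k) (Set.Icc 0 T) ≤ ENNReal.ofReal C)
    (hptw : ∀ t ∈ Set.Icc (0 : ℝ) T,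
      Tendsto (fun k => f k t) atTop (𝓝 (flim t))) :
    ∃ κ : ℕ → ℕ, StrictMono κ ∧ ∃ J : Set ℝ, J.Countable ∧
      ∀ t ∈ Set.Icc (0 : ℝ) T \ J, ∀ ts : ℕ → ℝ,
        (∀ j, ts j ∈ Set.Icc (0 : ℝ) T) → Tendsto ts atTop (𝓝 t) →
        Tendsto (fun j => f (κ j) (ts j)) atTop (𝓝 (flim t)) := by
  obtain ⟨C, hC⟩ := hvar
  set S : Set ℝ := Set.Icc 0 T with hS
  have h0S : (0 : ℝ) ∈ S := ⟨le_refl _, hT.le⟩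
  have hbv : ∀ k, BoundedVariationOn (f k) S :=
    fun k => ((hC k).trans_lt ENNReal.ofReal_lt_top).ne
  set C' : ℝ := max C 0 with hC'
  -- clipping to [0,T]
  set clip : ℝ → ℝ := fun x => max 0 (min x T) with hclip
  have hclipmem : ∀ x, clip x ∈ S := fun x =>
    ⟨le_max_left _ _, max_le hT.le (min_le_right _ _)⟩
  have hclipmono : Monotone clip := fun x y hxy =>
    max_le_max le_rfl (min_le_min_right _ hxy)
  -- the variation functions
  set v : ℕ → ℝ → ℝ := fun k x => variationOnFromTo (f k) S 0 x with hv
  have hv0 : ∀ k, ∀ x ∈ S, 0 ≤ v k x := fun k x hx =>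
    variationOnFromTo.nonneg_of_le _ _ hx.1
  have hvC : ∀ k, ∀ x ∈ S, v k x ≤ C' := by
    intro k x hx
    have h1 : v k x = (eVariationOn (f k) (S ∩ Set.Icc 0 x)).toReal :=
      variationOnFromTo.eq_of_le _ _ hx.1
    have h2 : eVariationOn (f k) (S ∩ Set.Icc 0 x) ≤ ENNReal.ofReal C' := by
      refine le_trans (le_trans (eVariationOn.mono _ Set.inter_subset_left) (hC k)) ?_
      exact ENNReal.ofReal_le_ofReal (le_max_left _ _)
    rw [h1]
    calc (eVariationOn (f k) (S ∩ Set.Icc 0 x)).toReal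
        ≤ (ENNReal.ofReal C').toReal :=
          ENNReal.toReal_mono ENNReal.ofReal_ne_top h2
      _ = C' := ENNReal.toReal_ofReal (le_max_right _ _)
  have hvmono : ∀ k, MonotoneOn (v k) S := fun k =>
    variationOnFromTo.monotoneOn (hbv k).locallyBoundedVariationOn h0S
  -- Helly-type selection on rationals via compactness
  set w : ℕ → (ℚ → Set.Icc (0:ℝ) C') := fun k q =>
    ⟨v k (clip q), hv0 k _ (hclipmem _), hvC k _ (hclipmem _)⟩ with hw
  obtain ⟨L, κ, hκ, hconv⟩ := CompactSpace.tendsto_subseq w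
  have hconvq : ∀ q : ℚ, Tendsto (fun j => v (κ j) (clip q)) atTop (𝓝 (L q : ℝ)) := by
    intro q
    exact (continuous_subtype_val.tendsto (L q)).comp (tendsto_pi_nhds.1 hconv q)
  set ℓ : ℚ → ℝ := fun q => (L q : ℝ) with hℓ
  have hℓmono : ∀ q r : ℚ, q ≤ r → ℓ q ≤ ℓ r := by
    intro q r hqr
    refine le_of_tendsto_of_tendsto' (hconvq q) (hconvq r) fun j => ?_
    exact hvmono (κ j) (hclipmem _) (hclipmem _) (hclipmono (by exact_mod_cast hqr))
  -- the monotone envelope on ℝ and its discontinuity set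
  set G : ℝ → ℝ := fun x => sSup (ℓ '' {q : ℚ | (q : ℝ) ≤ x}) with hG
  have hne : ∀ x : ℝ, (ℓ '' {q : ℚ | (q : ℝ) ≤ x}).Nonempty := by
    intro x
    obtain ⟨q, hq⟩ := exists_rat_lt x
    exact ⟨ℓ q, q, hq.le, rfl⟩
  have hbdd : ∀ x : ℝ, BddAbove (ℓ '' {q : ℚ | (q : ℝ) ≤ x}) := by
    intro x
    refine ⟨C', ?_⟩
    rintro y ⟨q, -, rfl⟩
    exact (L q).2.2
  have hGmono : Monotone G := by
    intro x y hxy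
    exact csSup_le_csSup (hbdd y) (hne x)
      (Set.image_mono fun q hq => le_trans hq hxy)
  refine ⟨κ, hκ, {x | ¬ContinuousAt G x}, hGmono.countable_not_continuousAt, ?_⟩
  intro t ht ts hts hlim
  have htS : t ∈ S := ht.1
  have hcont : ContinuousAt G t := not_not.1 ht.2
  rw [Metric.tendsto_nhds]
  intro ε hε
  obtain ⟨δ, hδ, hGδ⟩ := Metric.continuousAt_iff.1 hcont (ε/4) (by positivity)
  obtain ⟨s, hs1, hs2⟩ := exists_rat_btwn (show t - δ/2 < t by linarith)
  obtain ⟨u, hu1, hu2⟩ := exists_rat_btwn (show t < t + δ/2 by linarith)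
  -- the key smallness of the limit variation increment
  have key1 : ℓ u - ℓ s < ε/2 := by
    have h1 : ℓ u ≤ G (t + 3*δ/4) :=
      le_csSup (hbdd _) ⟨u, by simp only [Set.mem_setOf_eq]; linarith, rfl⟩
    have h2 : G (t - 3*δ/4) ≤ ℓ s := by
      refine csSup_le (hne _) ?_
      rintro y ⟨q, hq, rfl⟩
      simp only [Set.mem_setOf_eq] at hq
      refine hℓmono q s (by exact_mod_cast (by linarith : (q:ℝ) ≤ (s:ℝ)))
    have d1 : dist (t + 3*δ/4) t < δ := by
      rw [Real.dist_eq, abs_of_nonneg (by linarith)]; linarith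
    have d2 : dist (t - 3*δ/4) t < δ := by
      rw [Real.dist_eq, abs_of_nonpos (by linarith)]; linarith
    have e1 := hGδ d1
    have e2 := hGδ d2
    rw [Real.dist_eq, abs_lt] at e1 e2
    linarith [e1.1, e1.2, e2.1, e2.2]
  set cs : ℝ := clip s with hcs
  set cu : ℝ := clip u with hcu
  have hcsS : cs ∈ S := hclipmem _
  have hcuS : cu ∈ S := hclipmem _
  have hcs_le_t : cs ≤ t := max_le htS.1 (le_trans (min_le_left _ _) (by linarith))
  have ht_le_cu : t ≤ cu :=
    le_trans (le_min (by linarith) htS.2) (le_max_right _ _)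
  -- key pointwise estimate
  have key2 : ∀ k, ∀ a ∈ S, cs ≤ a → a ≤ cu → |f k a - f k t| ≤ v k cu - v k cs := by
    intro k a haS hcsa hacu
    have hbv' : BoundedVariationOn (f k) (S ∩ Set.Icc cs cu) :=
      (hbv k).mono Set.inter_subset_left
    have hda : dist (f k a) (f k t) ≤ (eVariationOn (f k) (S ∩ Set.Icc cs cu)).toReal :=
      hbv'.dist_le ⟨haS, hcsa, hacu⟩ ⟨htS, hcs_le_t, ht_le_cu⟩
    have heq : (eVariationOn (f k) (S ∩ Set.Icc cs cu)).toReal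
        = variationOnFromTo (f k) S cs cu :=
      (variationOnFromTo.eq_of_le _ _ (hcs_le_t.trans ht_le_cu)).symm
    have hadd : v k cs + variationOnFromTo (f k) S cs cu = v k cu :=
      variationOnFromTo.add (hbv k).locallyBoundedVariationOn h0S hcsS hcuS
    rw [← Real.dist_eq]
    rw [heq] at hda
    linarith
  -- eventual estimates
  have hA : Tendsto (fun j => v (κ j) cu - v (κ j) cs) atTop (𝓝 (ℓ u - ℓ s)) :=
    (hconvq u).sub (hconvq s)
  have ev1 : ∀ᶠ j in atTop, v (κ j) cu - v (κ j) cs < ε/2 :=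
    hA.eventually_lt_const key1
  have hft : Tendsto (fun j => f (κ j) t) atTop (𝓝 (flim t)) :=
    (hptw t htS).comp hκ.tendsto_atTop
  have ev2 : ∀ᶠ j in atTop, dist (f (κ j) t) (flim t) < ε/2 :=
    (Metric.tendsto_nhds.1 hft) (ε/2) (by positivity)
  have ev3s : ∀ᶠ j in atTop, (s : ℝ) < ts j := hlim.eventually_const_lt hs2
  have ev3u : ∀ᶠ j in atTop, ts j < (u : ℝ) := hlim.eventually_lt_const hu1
  filter_upwards [ev1, ev2, ev3s, ev3u] with j h1 h2 h3 h4
  have hcs_le : cs ≤ ts j :=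
    max_le (hts j).1 (le_trans (min_le_left _ _) h3.le)
  have hle_cu : ts j ≤ cu :=
    le_trans (le_min h4.le (hts j).2) (le_max_right _ _)
  have hkey := key2 (κ j) (ts j) (hts j) hcs_le hle_cu
  calc dist (f (κ j) (ts j)) (flim t)
      ≤ dist (f (κ j) (ts j)) (f (κ j) t) + dist (f (κ j) t) (flim t) := dist_triangle _ _ _
    _ < ε/2 + ε/2 := by
        refine add_lt_add_of_le_of_lt ?_ h2
        rw [Real.dist_eq]
        linarith
    _ = ε := by ring
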